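/- arXiv:2503.09374 — 3 statements merged into one kernel-verified Lean document; each statement's English description precedes it below -/
import Mathlib

section
/- Let λ > 0 and s ∈ ℝᵈ. Define r = 1/(1 + √(λ/(λ + sᵀs))) and R = (1/√λ)·(I_d − r·(s sᵀ)/(λ + sᵀs)). Then R·Rᵀ = (s sᵀ + λ·I_d)⁻¹. -/
open Matrix

lemma vecMulVec_mul_vecMulVec' {d : ℕ} (s : Fin d → ℝ) :
    Matrix.vecMulVec s s * Matrix.vecMulVec s s = (s ⬝ᵥ s) • Matrix.vecMulVec s s := by
  ext i j
  simp only [Matrix.mul_apply, Matrix.vecMulVec_apply, Matrix.smul_apply, smul_eq_mul,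
    dotProduct, Finset.sum_mul, Finset.mul_sum]
  exact Finset.sum_congr rfl fun k _ => by ring

lemma vecMulVec_transpose' {d : ℕ} (s : Fin d → ℝ) :
    (Matrix.vecMulVec s s)ᵀ = Matrix.vecMulVec s s := by
  ext i j
  simp [Matrix.vecMulVec_apply, mul_comm]

/-- Initialization of the square-root factor in Fisher adaptive MALA:
with `r = 1/(1 + √(λ/(λ + sᵀs)))` and
`R = (1/√λ)(I_d − r s sᵀ/(λ + sᵀs))`, one has `R Rᵀ = (s sᵀ + λ I_d)⁻¹`. -/
theorem sqrt_factor_initialization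
    {d : ℕ} (lam : ℝ) (hlam : 0 < lam) (s : Fin d → ℝ) :
    let r : ℝ := 1 / (1 + Real.sqrt (lam / (lam + s ⬝ᵥ s)))
    let R : Matrix (Fin d) (Fin d) ℝ :=
      (1 / Real.sqrt lam) • ((1 : Matrix (Fin d) (Fin d) ℝ)
        - (r / (lam + s ⬝ᵥ s)) • Matrix.vecMulVec s s)
    R * Rᵀ = (Matrix.vecMulVec s s + lam • (1 : Matrix (Fin d) (Fin d) ℝ))⁻¹ := by
  intro r R
  set a : ℝ := s ⬝ᵥ s with ha_def
  have ha : 0 ≤ a := Finset.sum_nonneg fun i _ => mul_self_nonneg _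
  have hL : (0:ℝ) < lam + a := by linarith
  set t : ℝ := Real.sqrt (lam / (lam + a)) with ht_def
  have ht0 : 0 ≤ t := Real.sqrt_nonneg _
  have ht2 : t ^ 2 = lam / (lam + a) := Real.sq_sqrt (by positivity)
  have h1t : (0:ℝ) < 1 + t := by linarith
  set S : Matrix (Fin d) (Fin d) ℝ := Matrix.vecMulVec s s with hS_def
  have hSS : S * S = a • S := vecMulVec_mul_vecMulVec' s
  have hST : Sᵀ = S := vecMulVec_transpose' s
  have hr : r = 1 / (1 + t) := rfl
  -- key scalar identity
  have hkey : 2 * (r / (lam + a)) - (r / (lam + a)) ^ 2 * a = 1 / (lam + a) := by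
    have haL : a / (lam + a) = 1 - t ^ 2 := by
      rw [ht2]; field_simp; ring
    have h2 : 2 * r - r ^ 2 * (a / (lam + a)) = 1 := by
      rw [haL, hr]
      field_simp
      ring
    have h3 : 2 * (r / (lam + a)) - (r / (lam + a)) ^ 2 * a
        = (2 * r - r ^ 2 * (a / (lam + a))) / (lam + a) := by
      field_simp
    rw [h3, h2]
  -- R is symmetric
  have hRT : Rᵀ = R := by
    show ((1 / Real.sqrt lam) • ((1 : Matrix (Fin d) (Fin d) ℝ)
        - (r / (lam + a)) • S))ᵀ = _
    rw [Matrix.transpose_smul, Matrix.transpose_sub, Matrix.transpose_smul, hST,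
      Matrix.transpose_one]
  have hsl : Real.sqrt lam * Real.sqrt lam = lam := Real.mul_self_sqrt hlam.le
  have hslne : Real.sqrt lam ≠ 0 := by positivity
  -- compute R * Rᵀ
  have hRR : R * Rᵀ = (1 / lam) • ((1 : Matrix (Fin d) (Fin d) ℝ) - (1 / (lam + a)) • S) := by
    rw [hRT]
    show ((1 / Real.sqrt lam) • ((1 : Matrix (Fin d) (Fin d) ℝ) - (r / (lam + a)) • S))
        * ((1 / Real.sqrt lam) • ((1 : Matrix (Fin d) (Fin d) ℝ) - (r / (lam + a)) • S)) = _
    have hmid : ((1 : Matrix (Fin d) (Fin d) ℝ) - (r / (lam + a)) • S)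
        * ((1 : Matrix (Fin d) (Fin d) ℝ) - (r / (lam + a)) • S)
        = (1 : Matrix (Fin d) (Fin d) ℝ) - (1 / (lam + a)) • S := by
      simp only [sub_mul, mul_sub, one_mul, mul_one, Matrix.smul_mul, Matrix.mul_smul,
        hSS, smul_smul]
      match_scalars
      · ring
      · linear_combination -hkey
    rw [Matrix.smul_mul, Matrix.mul_smul, smul_smul, hmid, div_mul_div_comm, one_mul, hsl]
  rw [hRR]
  -- now show this is the inverse
  symm
  apply Matrix.inv_eq_right_inv
  simp only [smul_sub, mul_sub, add_mul, Matrix.smul_mul, Matrix.mul_smul, one_mul, mul_one,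
    hSS, smul_smul]
  match_scalars
  · field_simp
    ring
  · field_simp
end

section
/- Let R be a d×d real matrix, set M = R·Rᵀ, and let s ∈ ℝᵈ. Define φ = Rᵀs, r = 1/(1 + √(1/(1 + φᵀφ))), and R' = R − r·(Rφ)φᵀ/(1 + φᵀφ). Then R'·(R')ᵀ = M − (M s sᵀ M)/(1 + sᵀ M s). -/
open Matrix

lemma key_scalar (a : ℝ) (ha : 0 ≤ a) :
    2 * ((1 / (1 + Real.sqrt (1 / (1 + a)))) / (1 + a))
      - ((1 / (1 + Real.sqrt (1 / (1 + a)))) / (1 + a))^2 * a = (1 + a)⁻¹ := by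
  have h1 : (0:ℝ) < 1 + a := by linarith
  set t := Real.sqrt (1 / (1 + a)) with ht
  have ht0 : 0 < t := Real.sqrt_pos.mpr (by positivity)
  have ht2 : t ^ 2 = 1 / (1 + a) := Real.sq_sqrt (by positivity)
  have h2 : (0:ℝ) < 1 + t := by linarith
  have key : t ^ 2 * (1 + a) = 1 := by rw [ht2]; field_simp
  field_simp
  linear_combination (-1) * key

/-- Iterative square-root update of Fisher adaptive MALA: if `R Rᵀ = M`,
`φ = Rᵀs`, `r = 1/(1 + √(1/(1 + φᵀφ)))` and
`R' = R − r (Rφ)φᵀ/(1 + φᵀφ)`, then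
`R' R'ᵀ = M − M s sᵀ M/(1 + sᵀ M s)`. -/
theorem sqrt_factor_rank_one_update
    {d : ℕ} (R : Matrix (Fin d) (Fin d) ℝ) (s : Fin d → ℝ) :
    let M : Matrix (Fin d) (Fin d) ℝ := R * Rᵀ
    let φ : Fin d → ℝ := Rᵀ *ᵥ s
    let r : ℝ := 1 / (1 + Real.sqrt (1 / (1 + φ ⬝ᵥ φ)))
    let R' : Matrix (Fin d) (Fin d) ℝ :=
      R - (r / (1 + φ ⬝ᵥ φ)) • Matrix.vecMulVec (R *ᵥ φ) φ
    R' * R'ᵀ = M - (1 + s ⬝ᵥ (M *ᵥ s))⁻¹ • (M * Matrix.vecMulVec s s * M) := by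
  intro M φ r R'
  set a : ℝ := φ ⬝ᵥ φ with haeq
  set u : Fin d → ℝ := R *ᵥ φ with hueq
  set k : ℝ := r / (1 + a) with hkeq
  have ha : 0 ≤ a := Finset.sum_nonneg fun x _ => mul_self_nonneg _
  have hMsymm : Mᵀ = M := by simp [M, transpose_mul]
  have hMs : M *ᵥ s = u := by
    rw [hueq, show M = R * Rᵀ from rfl, ← mulVec_mulVec]
  have hdot : s ⬝ᵥ (M *ᵥ s) = a := by
    rw [hMs, hueq, haeq, dotProduct_mulVec, ← mulVec_transpose]
  have hvm : s ᵥ* M = u := by rw [← hMsymm, vecMul_transpose, hMs]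
  have hmid : M * Matrix.vecMulVec s s * M = Matrix.vecMulVec u u := by
    rw [vecMulVec_eq Unit s s, vecMulVec_eq Unit u u]
    simp only [Matrix.mul_assoc]
    rw [← replicateRow_vecMul, hvm, ← Matrix.mul_assoc, ← replicateCol_mulVec, hMs]
  rw [hdot, hmid]
  ext i j
  have hui : ∑ x, R i x * φ x = u i := rfl
  have huj : ∑ x, R j x * φ x = u j := rfl
  have hMij : (M : Matrix (Fin d) (Fin d) ℝ) i j = ∑ x, R i x * R j x := by
    simp [M, Matrix.mul_apply]
  simp only [Matrix.sub_apply, Matrix.mul_apply, Matrix.transpose_apply,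
    Matrix.smul_apply, vecMulVec_apply, smul_eq_mul]
  have expand : ∀ x, (R i x - k * (u i * φ x)) * (R j x - k * (u j * φ x))
      = R i x * R j x - (k * u j) * (R i x * φ x) - (k * u i) * (R j x * φ x)
        + (k ^ 2 * u i * u j) * (φ x * φ x) := fun x => by ring
  calc (∑ x, (R i x - k * (u i * φ x)) * (R j x - k * (u j * φ x)))
      = ∑ x, (R i x * R j x - (k * u j) * (R i x * φ x)
          - (k * u i) * (R j x * φ x) + (k ^ 2 * u i * u j) * (φ x * φ x)) :=
        Finset.sum_congr rfl fun x _ => expand x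
    _ = (∑ x, R i x * R j x) - (k * u j) * (∑ x, R i x * φ x)
          - (k * u i) * (∑ x, R j x * φ x)
          + (k ^ 2 * u i * u j) * (∑ x, φ x * φ x) := by
        rw [Finset.sum_add_distrib, Finset.sum_sub_distrib, Finset.sum_sub_distrib,
          ← Finset.mul_sum, ← Finset.mul_sum, ← Finset.mul_sum]
    _ = M i j - (2 * k - k ^ 2 * a) * (u i * u j) := by
        rw [hui, huj, ← hMij, show (∑ x, φ x * φ x) = a from rfl]; ring
    _ = M i j - (1 + a)⁻¹ * (u i * u j) := by
        have hkval : k = 1 / (1 + Real.sqrt (1 / (1 + a))) / (1 + a) := rfl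
        rw [hkval, key_scalar a ha]
end

section
/- Let ℐ be a symmetric positive definite d×d real matrix and c > 0. Then for every symmetric positive semidefinite d×d real matrix M with tr(M) = c, one has tr(M ℐ M) ≥ c²/tr(ℐ⁻¹), and equality holds if and only if M = (c/tr(ℐ⁻¹))·ℐ⁻¹. In particular, the minimizer of tr(M ℐ M) over symmetric positive semidefinite matrices with trace c is proportional to the inverse Fisher matrix ℐ⁻¹. -/
open Matrix

private lemma trace_ct_mul_self_nonneg {d : ℕ} (B : Matrix (Fin d) (Fin d) ℝ) :
    0 ≤ (Bᴴ * B).trace := by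
  simp only [trace, diag_apply, mul_apply, conjTranspose_apply, star_trivial]
  exact Finset.sum_nonneg fun j _ => Finset.sum_nonneg fun i _ => mul_self_nonneg _

private lemma eq_zero_of_trace_ct_mul_self {d : ℕ} (B : Matrix (Fin d) (Fin d) ℝ)
    (h : (Bᴴ * B).trace = 0) : B = 0 := by
  ext i j
  have h' : ∑ j, ∑ i, B i j * B i j = 0 := by
    simpa [trace, diag_apply, mul_apply, conjTranspose_apply] using h
  have hnn : ∀ j ∈ Finset.univ, (0:ℝ) ≤ ∑ i, B i j * B i j := fun j _ =>
    Finset.sum_nonneg fun i _ => mul_self_nonneg _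
  have h2 := (Finset.sum_eq_zero_iff_of_nonneg hnn).mp h' j (Finset.mem_univ j)
  have h3 := (Finset.sum_eq_zero_iff_of_nonneg
    (fun i _ => mul_self_nonneg (B i j))).mp h2 i (Finset.mem_univ i)
  simpa [mul_self_eq_zero] using h3

private lemma posDef_trace_pos {d : ℕ} [NeZero d] {A : Matrix (Fin d) (Fin d) ℝ}
    (hA : A.PosDef) : 0 < A.trace := by
  have hdiag : ∀ i, 0 < A i i := by
    intro i
    have hne : (Pi.single i 1 : Fin d → ℝ) ≠ 0 := by
      intro h
      have := congrFun h i
      simp [Pi.single_eq_same] at this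
    have := hA.dotProduct_mulVec_pos hne
    simpa [dotProduct, mulVec, Pi.single_apply, Finset.sum_ite_eq, star_trivial] using this
  have : 0 < ∑ i, A i i :=
    Finset.sum_pos (fun i _ => hdiag i) ⟨0, Finset.mem_univ 0⟩
  simpa [trace, diag] using this

/-- Optimality of the inverse Fisher matrix as preconditioner: for a symmetric
positive definite `𝓘` and any symmetric positive semidefinite `M` with
`tr(M) = c > 0`, one has `tr(M𝓘M) ≥ c²/tr(𝓘⁻¹)`, with equality if and only if
`M = (c/tr(𝓘⁻¹)) 𝓘⁻¹`. -/
theorem inverse_fisher_optimal_preconditioner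
    {d : ℕ} (𝓘 : Matrix (Fin d) (Fin d) ℝ) (h𝓘 : 𝓘.PosDef)
    (c : ℝ) (hc : 0 < c) :
    ∀ M : Matrix (Fin d) (Fin d) ℝ, M.PosSemidef → M.trace = c →
      c ^ 2 / (𝓘⁻¹).trace ≤ (M * 𝓘 * M).trace ∧
      ((M * 𝓘 * M).trace = c ^ 2 / (𝓘⁻¹).trace ↔ M = (c / (𝓘⁻¹).trace) • 𝓘⁻¹) := by
  intro M hM hMtr
  rcases Nat.eq_zero_or_pos d with hd | hd
  · exfalso
    subst hd
    rw [Matrix.trace_eq_zero_of_isEmpty] at hMtr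
    exact hc.ne hMtr
  haveI : NeZero d := ⟨hd.ne'⟩
  set A : Matrix (Fin d) (Fin d) ℝ := 𝓘⁻¹ with hA
  have hApd : A.PosDef := h𝓘.inv
  have ht : 0 < A.trace := posDef_trace_pos hApd
  set t : ℝ := A.trace with htdef
  have ht0 : t ≠ 0 := ht.ne'
  set lam : ℝ := c / t with hlam
  set N : Matrix (Fin d) (Fin d) ℝ := M - lam • A with hN
  have hMA : M = N + lam • A := by rw [hN]; abel
  have hdet : IsUnit 𝓘.det := isUnit_iff_ne_zero.mpr h𝓘.det_pos.ne'
  have h𝓘A : 𝓘 * A = 1 := Matrix.mul_nonsing_inv 𝓘 hdet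
  have hA𝓘 : A * 𝓘 = 1 := Matrix.nonsing_inv_mul 𝓘 hdet
  -- trace of N is zero
  have htrN : N.trace = 0 := by
    rw [hN, trace_sub, trace_smul, hMtr, ← htdef, hlam]
    rw [smul_eq_mul, div_mul_cancel₀ c ht0, sub_self]
  -- expansion
  have e1 : M * 𝓘 * M = N * 𝓘 * N + lam • (N * (𝓘 * A)) + lam • ((A * 𝓘) * N)
      + (lam * lam) • ((A * 𝓘) * A) := by
    rw [hMA]
    simp only [add_mul, mul_add, Matrix.smul_mul, Matrix.mul_smul, smul_smul, Matrix.mul_assoc]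
    abel
  have e2 : (M * 𝓘 * M).trace = (N * 𝓘 * N).trace + c ^ 2 / t := by
    rw [e1, h𝓘A, hA𝓘]
    simp only [Matrix.mul_one, Matrix.one_mul, trace_add, trace_smul, htrN, smul_eq_mul,
      mul_zero, add_zero, ← htdef]
    rw [hlam]
    field_simp
  -- N is Hermitian
  have hNh : Nᴴ = N := by
    rw [hN, conjTranspose_sub, conjTranspose_smul, hM.1, hApd.isHermitian]
    simp
  -- square root of 𝓘
  open scoped MatrixOrder in
  set L : Matrix (Fin d) (Fin d) ℝ := CFC.sqrt 𝓘 with hL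
  open scoped MatrixOrder in
  have hLL : L * L = 𝓘 := CFC.sqrt_mul_sqrt_self 𝓘 h𝓘.posSemidef.nonneg
  open scoped MatrixOrder in
  have hLh : Lᴴ = L := (CFC.sqrt_nonneg 𝓘).posSemidef.1
  have key2 : N * 𝓘 * N = (L * N)ᴴ * (L * N) := by
    rw [conjTranspose_mul, hLh, hNh, ← hLL]
    simp only [Matrix.mul_assoc]
  have hLdet : IsUnit L.det := by
    apply isUnit_iff_ne_zero.mpr
    intro h0
    have : 𝓘.det = 0 := by rw [← hLL, det_mul, h0, mul_zero]
    exact h𝓘.det_pos.ne' this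
  constructor
  · rw [e2]
    have := trace_ct_mul_self_nonneg (L * N)
    rw [← key2] at this
    linarith
  · constructor
    · intro heq
      have h0 : (N * 𝓘 * N).trace = 0 := by rw [e2] at heq; linarith
      rw [key2] at h0
      have hLN : L * N = 0 := eq_zero_of_trace_ct_mul_self _ h0
      have hN0 : N = 0 := by
        have : L⁻¹ * (L * N) = L⁻¹ * 0 := by rw [hLN]
        rwa [← Matrix.mul_assoc, Matrix.nonsing_inv_mul L hLdet, Matrix.one_mul,
          Matrix.mul_zero] at this
      have : M = lam • A := by rw [hMA, hN0, zero_add]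
      exact this
    · intro hMeq
      have hN0 : N = 0 := by rw [hN, hMeq, sub_self]
      rw [e2, hN0]
      simp
end
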